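/- Let X be a nonempty finite set, p a positive probability mass function on X, and A : X → ℝ. Let B_1, …, B_m : X → ℝ satisfy E_p[B_i] = 0 for all i, and suppose the Gram matrix G with entries G_{i,j} = E_p[B_i·B_j] is invertible. Let v ∈ ℝ^m have entries v_i = E_p[A·B_i]. Then Var_p(A) ≥ vᵀ G^{-1} v, with equality if and only if the function A − E_p[A] (the constant E_p[A] subtracted from A) lies in the linear span of {B_1, …, B_m}. -/

import Mathlib

/-- Expectation of `A` under the probability mass function `p` on a finite set. -/
noncomputable def Ep {X : Type*} [Fintype X] (p A : X → ℝ) : ℝ := ∑ x, p x * A x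

/-- Variance of `A` under the probability mass function `p` on a finite set. -/
noncomputable def Varp {X : Type*} [Fintype X] (p A : X → ℝ) : ℝ :=
  ∑ x, p x * (A x - Ep p A) ^ 2

/-- if `B_1, …, B_m` are centered under `p` with invertible Gram matrix
`G_{i,j} = E_p[B_i B_j]` and `v_i = E_p[A·B_i]`, then `Var_p(A) ≥ vᵀ G⁻¹ v`, with
equality iff `A − E_p[A]` lies in the span of the `B_i`. -/
theorem stmt_4 {X : Type*} [Fintype X] [Nonempty X]
    (p : X → ℝ) (hp : ∀ x, 0 < p x) (hsum : ∑ x, p x = 1)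
    (A : X → ℝ) (m : ℕ) (B : Fin m → X → ℝ) (hB : ∀ i, Ep p (B i) = 0)
    (G : Matrix (Fin m) (Fin m) ℝ)
    (hG : ∀ i j, G i j = Ep p (fun x => B i x * B j x))
    (hGinv : IsUnit G.det)
    (v : Fin m → ℝ) (hv : ∀ i, v i = Ep p (fun x => A x * B i x)) :
    dotProduct v (G⁻¹.mulVec v) ≤ Varp p A ∧
    (Varp p A = dotProduct v (G⁻¹.mulVec v) ↔
      (fun x => A x - Ep p A) ∈ Submodule.span ℝ (Set.range B)) := by
  classical
  set E : ℝ := Ep p A with hE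
  set f : X → ℝ := fun x => A x - E with hf
  set w : Fin m → ℝ := G⁻¹.mulVec v with hw
  have hBsum : ∀ i, ∑ x, p x * B i x = 0 := fun i => hB i
  have hfB : ∀ i, ∑ x, p x * (f x * B i x) = v i := by
    intro i
    have h1 : ∀ x, p x * (f x * B i x)
        = p x * (A x * B i x) - E * (p x * B i x) := by
      intro x; simp only [hf]; ring
    rw [Finset.sum_congr rfl fun x _ => h1 x, Finset.sum_sub_distrib,
      ← Finset.mul_sum, hBsum i, hv i]
    simp [Ep]
  have hGram : ∀ i j, ∑ x, p x * (B i x * B j x) = G i j := by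
    intro i j; rw [hG]; rfl
  have hGw : G.mulVec w = v := by
    rw [hw, Matrix.mulVec_mulVec, Matrix.mul_nonsing_inv G hGinv, Matrix.one_mulVec]
  set S : X → ℝ := fun x => ∑ i, w i * B i x with hSdef
  have hS1 : ∑ x, p x * (f x * S x) = ∑ i, w i * v i := by
    have h1 : ∀ x, p x * (f x * S x) = ∑ i, w i * (p x * (f x * B i x)) := by
      intro x
      simp only [hSdef, Finset.mul_sum]
      exact Finset.sum_congr rfl fun i _ => by ring
    rw [Finset.sum_congr rfl fun x _ => h1 x, Finset.sum_comm]
    exact Finset.sum_congr rfl fun i _ => by rw [← Finset.mul_sum, hfB i]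
  have hS2 : ∑ x, p x * S x ^ 2 = ∑ i, w i * v i := by
    have h1 : ∀ x, p x * S x ^ 2 = ∑ i, ∑ j, w i * w j * (p x * (B i x * B j x)) := by
      intro x
      rw [show S x ^ 2 = ∑ i, ∑ j, (w i * B i x) * (w j * B j x) by
          rw [sq]; exact Finset.sum_mul_sum _ _ _ _, Finset.mul_sum]
      exact Finset.sum_congr rfl fun i _ => by
        rw [Finset.mul_sum]
        exact Finset.sum_congr rfl fun j _ => by ring
    rw [Finset.sum_congr rfl fun x _ => h1 x, Finset.sum_comm]
    refine Finset.sum_congr rfl fun i _ => ?_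
    rw [Finset.sum_comm]
    have h3 : ∀ j, ∑ x, w i * w j * (p x * (B i x * B j x))
        = w i * (G i j * w j) := by
      intro j
      rw [show (∑ x, w i * w j * (p x * (B i x * B j x)))
          = w i * w j * ∑ x, p x * (B i x * B j x) from (Finset.mul_sum _ _ _).symm,
        hGram i j]
      ring
    rw [Finset.sum_congr rfl fun j _ => h3 j, ← Finset.mul_sum]
    have : ∑ j, G i j * w j = v i := by
      rw [← hGw]; rfl
    rw [this]
  have hdot : dotProduct v (G⁻¹.mulVec v) = ∑ i, w i * v i := by
    rw [← hw]
    simp [dotProduct, mul_comm]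
  have hVar : Varp p A = ∑ x, p x * f x ^ 2 := by
    simp only [Varp, hf, hE]
  have key : ∑ x, p x * (f x - S x) ^ 2
      = Varp p A - dotProduct v (G⁻¹.mulVec v) := by
    have expand : ∀ x, p x * (f x - S x) ^ 2
        = p x * f x ^ 2 - 2 * (p x * (f x * S x)) + p x * S x ^ 2 := by
      intro x; ring
    rw [Finset.sum_congr rfl fun x _ => expand x, Finset.sum_add_distrib,
      Finset.sum_sub_distrib, ← Finset.mul_sum, hS1, hS2, hVar, hdot]
    ring
  have hnn : 0 ≤ ∑ x, p x * (f x - S x) ^ 2 :=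
    Finset.sum_nonneg fun x _ => mul_nonneg (hp x).le (sq_nonneg _)
  have hzero : Varp p A = dotProduct v (G⁻¹.mulVec v) ↔ ∀ x, f x = S x := by
    constructor
    · intro h
      have h0 : ∑ x, p x * (f x - S x) ^ 2 = 0 := by rw [key, h]; ring
      intro x
      have := (Finset.sum_eq_zero_iff_of_nonneg
        (fun x _ => mul_nonneg (hp x).le (sq_nonneg (f x - S x)))).mp h0 x
        (Finset.mem_univ x)
      have h2 : (f x - S x) ^ 2 = 0 := by
        rcases mul_eq_zero.mp this with h' | h'
        · exact absurd h' (hp x).ne'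
        · exact h'
      have := pow_eq_zero_iff (n := 2) (by norm_num) |>.mp h2
      linarith
    · intro h
      have h0 : ∑ x, p x * (f x - S x) ^ 2 = 0 :=
        Finset.sum_eq_zero fun x _ => by rw [h x]; ring
      rw [h0] at key
      linarith
  constructor
  · rw [key] at hnn
    have h' : dotProduct v (G⁻¹.mulVec v) ≤ Varp p A := by linarith
    exact h'
  · have hrfl : dotProduct v w = dotProduct v (G⁻¹.mulVec v) := rfl
    rw [hrfl, hzero, Submodule.mem_span_range_iff_exists_fun]
    constructor
    · intro h
      refine ⟨w, ?_⟩
      funext x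
      simp only [Finset.sum_apply, Pi.smul_apply, smul_eq_mul]
      rw [h x]
    · rintro ⟨c, hc⟩
      have hfx : ∀ x, f x = ∑ i, c i * B i x := by
        intro x
        rw [← congrFun hc x]
        simp [Finset.sum_apply, mul_comm]
      have hGsym : ∀ i j, G i j = G j i := by
        intro i j
        rw [← hGram i j, ← hGram j i]
        exact Finset.sum_congr rfl fun x _ => by ring
      have hvc : v = G.mulVec c := by
        funext i
        rw [← hfB i]
        have h1 : ∀ x, p x * (f x * B i x) = ∑ j, c j * (p x * (B j x * B i x)) := by
          intro x
          rw [hfx x, Finset.sum_mul, Finset.mul_sum]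
          exact Finset.sum_congr rfl fun j _ => by ring
        rw [Finset.sum_congr rfl fun x _ => h1 x, Finset.sum_comm]
        have h2 : ∀ j, ∑ x, c j * (p x * (B j x * B i x)) = G i j * c j := by
          intro j
          rw [show (∑ x, c j * (p x * (B j x * B i x)))
              = c j * ∑ x, p x * (B j x * B i x) from (Finset.mul_sum _ _ _).symm,
            hGram j i, hGsym i j]
          ring
        rw [Finset.sum_congr rfl fun j _ => h2 j]
        rfl
      have hwc : w = c := by
        rw [hw, hvc, Matrix.mulVec_mulVec, Matrix.nonsing_inv_mul G hGinv,
          Matrix.one_mulVec]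
      intro x
      rw [hfx x, hSdef]
      simp [hwc]
  done
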